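/- With notation as above, every eigenvalue λ of P = D̂^{-1/2}(A+I)D̂^{-1/2} satisfies -1 < λ ≤ 1. (The strict lower bound uses the self-loops: since Â has positive diagonal, -1 is not an eigenvalue.) -/

import Mathlib

theorem stmt4 {n : ℕ} (G : SimpleGraph (Fin n)) [DecidableRel G.Adj] :
    let Ahat : Matrix (Fin n) (Fin n) ℝ := G.adjMatrix ℝ + 1
    let d : Fin n → ℝ := fun i => ∑ j, Ahat i j
    let P : Matrix (Fin n) (Fin n) ℝ :=
      Matrix.diagonal (fun i => (Real.sqrt (d i))⁻¹) * Ahat *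
        Matrix.diagonal (fun i => (Real.sqrt (d i))⁻¹)
    ∀ μ ∈ spectrum ℝ P, -1 < μ ∧ μ ≤ 1 := by
  intro Ahat d P μ hμ
  have hA0 : ∀ i j, 0 ≤ Ahat i j := by
    intro i j
    simp only [Ahat, Matrix.add_apply, SimpleGraph.adjMatrix_apply, Matrix.one_apply]
    positivity
  have hAsymm : ∀ i j, Ahat i j = Ahat j i := by
    intro i j
    simp only [Ahat, Matrix.add_apply, SimpleGraph.adjMatrix_apply, Matrix.one_apply]
    simp [SimpleGraph.adj_comm, eq_comm]
  have hAdiag : ∀ i, Ahat i i = 1 := by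
    intro i; simp [Ahat]
  have hd1 : ∀ i, 1 ≤ d i := by
    intro i
    have := Finset.single_le_sum (f := fun j => Ahat i j) (fun j _ => hA0 i j)
      (Finset.mem_univ i)
    simp only [hAdiag] at this
    exact this
  have hd0 : ∀ i, 0 < d i := fun i => lt_of_lt_of_le one_pos (hd1 i)
  set s : Fin n → ℝ := fun i => Real.sqrt (d i) with hs
  have hs0 : ∀ i, 0 < s i := fun i => Real.sqrt_pos.mpr (hd0 i)
  have hssq : ∀ i, s i * s i = d i := fun i => Real.mul_self_sqrt (hd0 i).le
  -- extract eigenvector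
  have hnu : ¬ IsUnit (algebraMap ℝ (Matrix (Fin n) (Fin n) ℝ) μ - P) := spectrum.mem_iff.mp hμ
  have hdet : (algebraMap ℝ (Matrix (Fin n) (Fin n) ℝ) μ - P).det = 0 := by
    by_contra h
    exact hnu ((Matrix.isUnit_iff_isUnit_det _).mpr (isUnit_iff_ne_zero.mpr h))
  obtain ⟨v, hv0, hv⟩ := (Matrix.exists_mulVec_eq_zero_iff).mpr hdet
  have hev : P.mulVec v = μ • v := by
    have h1 : (algebraMap ℝ (Matrix (Fin n) (Fin n) ℝ) μ - P).mulVec v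
        = μ • v - P.mulVec v := by
      rw [Matrix.sub_mulVec, Algebra.algebraMap_eq_smul_one, Matrix.smul_mulVec,
        Matrix.one_mulVec]
    rw [h1] at hv
    exact (sub_eq_zero.mp hv).symm
  set w : Fin n → ℝ := fun i => (s i)⁻¹ * v i with hw
  have hvw : ∀ i, v i = s i * w i := by
    intro i
    rw [hw]
    simp only
    rw [← mul_assoc, mul_inv_cancel₀ (hs0 i).ne', one_mul]
  have hP : ∀ i j, P i j = (s i)⁻¹ * Ahat i j * (s j)⁻¹ := by
    intro i j
    simp [P, Matrix.mul_diagonal, Matrix.diagonal_mul, hs]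
  set S : ℝ := ∑ i, ∑ j, Ahat i j * w i * w j with hS
  set N : ℝ := ∑ i, d i * w i ^ 2 with hN
  have hkey : S = μ * N := by
    have h1 : ∑ i, v i * (P.mulVec v i) = ∑ i, v i * (μ * v i) := by
      rw [hev]; simp [Pi.smul_apply, smul_eq_mul]
    have h2 : ∑ i, v i * (P.mulVec v i) = S := by
      rw [hS]
      refine Finset.sum_congr rfl fun i _ => ?_
      simp only [Matrix.mulVec, dotProduct, hP, hw, Finset.mul_sum]
      refine Finset.sum_congr rfl fun j _ => ?_
      ring
    have h3 : ∑ i, v i * (μ * v i) = μ * N := by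
      rw [hN, Finset.mul_sum]
      refine Finset.sum_congr rfl fun i _ => ?_
      rw [hvw i, ← hssq i]
      ring
    rw [h2, h3] at h1
    exact h1
  obtain ⟨i0, hi0⟩ := Function.ne_iff.mp hv0
  have hwi0 : w i0 ≠ 0 := mul_ne_zero (inv_ne_zero (hs0 i0).ne') hi0
  have hwsq0 : 0 < w i0 ^ 2 := lt_of_le_of_ne (sq_nonneg _) (Ne.symm (pow_ne_zero 2 hwi0))
  have hNpos : 0 < N := by
    rw [hN]
    refine Finset.sum_pos' (fun j _ => mul_nonneg (hd0 j).le (sq_nonneg _)) ?_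
    exact ⟨i0, Finset.mem_univ i0, mul_pos (hd0 i0) hwsq0⟩
  have hTpos : 0 < ∑ i, w i ^ 2 := by
    refine Finset.sum_pos' (fun j _ => sq_nonneg _) ⟨i0, Finset.mem_univ i0, hwsq0⟩
  have N1 : N = ∑ i, ∑ j, Ahat i j * w i ^ 2 := by
    rw [hN]
    refine Finset.sum_congr rfl fun i _ => ?_
    rw [show d i = ∑ j, Ahat i j from rfl, Finset.sum_mul]
  have N2 : ∑ i, ∑ j, Ahat i j * w j ^ 2 = N := by
    rw [Finset.sum_comm, hN]
    refine Finset.sum_congr rfl fun j _ => ?_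
    calc ∑ i, Ahat i j * w j ^ 2 = ∑ i, Ahat j i * w j ^ 2 :=
          Finset.sum_congr rfl fun i _ => by rw [hAsymm]
      _ = (∑ i, Ahat j i) * w j ^ 2 := (Finset.sum_mul _ _ _).symm
      _ = d j * w j ^ 2 := rfl
  have hdiff : ∑ i, ∑ j, Ahat i j * (w i - w j) ^ 2 = 2 * N - 2 * S := by
    have expand : ∀ i j : Fin n, Ahat i j * (w i - w j) ^ 2
        = Ahat i j * w i ^ 2 + Ahat i j * w j ^ 2 - 2 * (Ahat i j * w i * w j) :=
      fun i j => by ring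
    simp_rw [expand, Finset.sum_sub_distrib, Finset.sum_add_distrib, ← Finset.mul_sum]
    rw [← N1, N2, ← hS]
    ring
  have hsumeq : ∑ i, ∑ j, Ahat i j * (w i + w j) ^ 2 = 2 * N + 2 * S := by
    have expand : ∀ i j : Fin n, Ahat i j * (w i + w j) ^ 2
        = Ahat i j * w i ^ 2 + Ahat i j * w j ^ 2 + 2 * (Ahat i j * w i * w j) :=
      fun i j => by ring
    simp_rw [expand, Finset.sum_add_distrib, ← Finset.mul_sum]
    rw [← N1, N2, ← hS]
    ring
  have hdiff0 : 0 ≤ ∑ i, ∑ j, Ahat i j * (w i - w j) ^ 2 :=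
    Finset.sum_nonneg fun i _ => Finset.sum_nonneg fun j _ => mul_nonneg (hA0 i j) (sq_nonneg _)
  have hsumlb : ∑ i, 4 * w i ^ 2 ≤ ∑ i, ∑ j, Ahat i j * (w i + w j) ^ 2 := by
    refine Finset.sum_le_sum fun i _ => ?_
    have h := Finset.single_le_sum (f := fun j => Ahat i j * (w i + w j) ^ 2)
      (fun j _ => mul_nonneg (hA0 i j) (sq_nonneg _)) (Finset.mem_univ i)
    calc 4 * w i ^ 2 = Ahat i i * (w i + w i) ^ 2 := by rw [hAdiag]; ring
      _ ≤ ∑ j, Ahat i j * (w i + w j) ^ 2 := h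
  have hsum4 : (4 : ℝ) * ∑ i, w i ^ 2 = ∑ i, 4 * w i ^ 2 := Finset.mul_sum _ _ _
  have hub : S ≤ N := by linarith [hdiff0, hdiff.symm.le, hdiff.le]
  have hlb : 0 < 2 * N + 2 * S := by
    rw [← hsumeq]
    calc (0:ℝ) < 4 * ∑ i, w i ^ 2 := by linarith
      _ = ∑ i, 4 * w i ^ 2 := hsum4
      _ ≤ _ := hsumlb
  constructor
  · nlinarith [hkey, hNpos, hlb]
  · nlinarith [hkey, hNpos, hub]
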